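/- Let u≥3 be odd and define G_{λ,λ′} = (i/(√3·u))·Σ_{w∈S₃}det(w)·e^{−4πi⟨w(λ̄+ρ),λ̄′+ρ⟩/u} for λ,λ′∈P⁺ᵘ. Then there exist a bijection π: P⁺ᵘ → P⁺ᵘ and a function ε: P⁺ᵘ → {1,−1} such that G_{λ,λ′} = ε(λ′)·𝒮ᵘ_{λ,π(λ′)} for all λ,λ′∈P⁺ᵘ. (The Galois transform of the level-(u−3) sl₃ S-matrix acts by a signed permutation of its columns.) -/

import Mathlib

noncomputable section

open Complex

/-- The six elements of the Weyl group `S₃` of sl₃ acting on weights in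
Dynkin-label coordinates: `id, w₁, w₂, w₁w₂, w₂w₁, w₃`. -/
def wmap (w : Fin 6) (x : ℂ × ℂ) : ℂ × ℂ :=
  ![x, (-x.1, x.1 + x.2), (x.1 + x.2, -x.2), (-x.1 - x.2, x.1),
    (x.2, -x.1 - x.2), (-x.2, -x.1)] w

/-- The signs of the six Weyl group elements. -/
def wdet : Fin 6 → ℤ := ![1, -1, -1, 1, 1, -1]

/-- The normalised invariant bilinear form of sl₃ in Dynkin-label coordinates. -/
def bform (x y : ℂ × ℂ) : ℂ :=
  (2 * x.1 * y.1 + x.1 * y.2 + x.2 * y.1 + 2 * x.2 * y.2) / 3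

/-- The Weyl vector `ρ = (1,1)`. -/
def rho : ℂ × ℂ := (1, 1)

/-- The set `P⁺ᵘ` of triples of nonnegative integers summing to `u-3`. -/
def Pplus (u : ℕ) : Finset (ℕ × ℕ × ℕ) :=
  (Finset.range u ×ˢ Finset.range u ×ˢ Finset.range u).filter
    (fun l => l.1 + l.2.1 + l.2.2 = u - 3)

/-- The finite part `λ̄ = (λ₁,λ₂)` of a triple `λ = (λ₀,λ₁,λ₂)`. -/
def bar (l : ℕ × ℕ × ℕ) : ℂ × ℂ := ((l.2.1 : ℂ), (l.2.2 : ℂ))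

/-- The level-`(u-3)` sl₃ WZW S-matrix entry `𝒮ᵘ_{λ,λ′}`. -/
def ScalP (u : ℕ) (l l' : ℕ × ℕ × ℕ) : ℂ :=
  (-I / (Real.sqrt 3 * u)) *
    ∑ w : Fin 6, (wdet w : ℂ) *
      exp (-2 * Real.pi * I * bform (wmap w (bar l + rho)) (bar l' + rho) / u)

/-- The Galois transform `G_{λ,λ′} = (i/(√3·u))·Σ_{w∈S₃}det(w)·e^{-4πi⟨w(λ̄+ρ),λ̄′+ρ⟩/u}`. -/
def Gmat (u : ℕ) (l l' : ℕ × ℕ × ℕ) : ℂ :=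
  (I / (Real.sqrt 3 * u)) *
    ∑ w : Fin 6, (wdet w : ℂ) *
      exp (-4 * Real.pi * I * bform (wmap w (bar l + rho)) (bar l' + rho) / u)


lemma wmap0 (x : ℂ × ℂ) : wmap 0 x = x := rfl
lemma wmap1 (x : ℂ × ℂ) : wmap 1 x = (-x.1, x.1 + x.2) := rfl
lemma wmap2 (x : ℂ × ℂ) : wmap 2 x = (x.1 + x.2, -x.2) := rfl
lemma wmap3 (x : ℂ × ℂ) : wmap 3 x = (-x.1 - x.2, x.1) := rfl
lemma wmap4 (x : ℂ × ℂ) : wmap 4 x = (x.2, -x.1 - x.2) := rfl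
lemma wmap5 (x : ℂ × ℂ) : wmap 5 x = (-x.2, -x.1) := rfl
lemma wdet0 : wdet 0 = 1 := rfl
lemma wdet1 : wdet 1 = -1 := rfl
lemma wdet2 : wdet 2 = -1 := rfl
lemma wdet3 : wdet 3 = 1 := rfl
lemma wdet4 : wdet 4 = 1 := rfl
lemma wdet5 : wdet 5 = -1 := rfl

lemma exp_shift (u : ℕ) (hu : 0 < u) (B1 B2 : ℂ) (n : ℤ) (h : 2 * B1 = B2 + u * n) :
    Complex.exp (-4 * Real.pi * I * B1 / u) = Complex.exp (-2 * Real.pi * I * B2 / u) := by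
  have hu' : (u : ℂ) ≠ 0 := Nat.cast_ne_zero.mpr hu.ne'
  have heq : (-4 * (Real.pi : ℂ) * I * B1 / u)
      = -2 * Real.pi * I * B2 / u + (-n : ℤ) * (2 * Real.pi * I) := by
    have hB : B2 = 2 * B1 - u * n := by linear_combination -h
    rw [hB]
    field_simp
    push_cast
    ring
  rw [heq, Complex.exp_add, Complex.exp_int_mul_two_pi_mul_I, mul_one]

lemma mem_Pplus {u : ℕ} {x : ℕ × ℕ × ℕ} :
    x ∈ Pplus u ↔ (x.1 < u ∧ x.2.1 < u ∧ x.2.2 < u) ∧ x.1 + x.2.1 + x.2.2 = u - 3 := by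
  simp [Pplus, Finset.mem_filter, Finset.mem_product, and_assoc]

/-- The Galois permutation: multiplication of `λ̄+ρ` by 2 followed by reduction
into the fundamental alcove by the affine Weyl group. -/
def pfun (u : ℕ) (l : ℕ × ℕ × ℕ) : ℕ × ℕ × ℕ :=
  if u < 2 * l.2.1 + 2 then
    (2 * l.2.2 + 1, 2 * u - (2 * l.2.1 + 2 * l.2.2 + 5), 2 * l.2.1 + 1 - u)
  else if u < 2 * l.2.2 + 2 then
    (2 * l.2.1 + 1, 2 * l.2.2 + 1 - u, 2 * u - (2 * l.2.1 + 2 * l.2.2 + 5))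
  else if u < 2 * l.2.1 + 2 * l.2.2 + 4 then
    (2 * l.2.1 + 2 * l.2.2 + 3 - u, u - (2 * l.2.2 + 3), u - (2 * l.2.1 + 3))
  else
    (u - (2 * l.2.1 + 2 * l.2.2 + 5), 2 * l.2.1 + 1, 2 * l.2.2 + 1)

/-- The sign function. -/
def efun (u : ℕ) (l : ℕ × ℕ × ℕ) : ℂ :=
  if ¬ u < 2 * l.2.1 + 2 ∧ ¬ u < 2 * l.2.2 + 2 ∧ u < 2 * l.2.1 + 2 * l.2.2 + 4 then 1 else -1

/-- The Galois transform of the level-`(u-3)` sl₃ S-matrix acts by a signed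
permutation of its columns: there exist a bijection `π` of `P⁺ᵘ` and a sign
function `ε : P⁺ᵘ → {1,-1}` with `G_{λ,λ′} = ε(λ′)·𝒮ᵘ_{λ,π(λ′)}`. -/
theorem stmt9 (u : ℕ) (hu : 3 ≤ u) (hodd : Odd u) :
    ∃ (p : ℕ × ℕ × ℕ → ℕ × ℕ × ℕ) (eps : ℕ × ℕ × ℕ → ℂ),
      Set.BijOn p (Pplus u : Set (ℕ × ℕ × ℕ)) (Pplus u : Set (ℕ × ℕ × ℕ)) ∧
      (∀ l ∈ Pplus u, eps l = 1 ∨ eps l = -1) ∧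
      (∀ l ∈ Pplus u, ∀ l' ∈ Pplus u, Gmat u l l' = eps l' * ScalP u l (p l')) := by
  obtain ⟨k, hk⟩ := hodd
  have hupos : 0 < u := by omega
  refine ⟨pfun u, efun u, ?_, ?_, ?_⟩
  · -- BijOn
    have hmaps : Set.MapsTo (pfun u) (Pplus u : Set (ℕ × ℕ × ℕ)) (Pplus u : Set (ℕ × ℕ × ℕ)) := by
      intro x hx
      rw [Finset.mem_coe, mem_Pplus] at hx ⊢
      unfold pfun
      split_ifs <;> dsimp only <;> omega
    have hinj : Set.InjOn (pfun u) (Pplus u : Set (ℕ × ℕ × ℕ)) := by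
      rintro ⟨a0, a1, a2⟩ ha ⟨b0, b1, b2⟩ hb h
      rw [Finset.mem_coe, mem_Pplus] at ha hb
      dsimp only at ha hb
      simp only [Prod.mk.injEq]
      unfold pfun at h
      dsimp only at h
      split_ifs at h <;> simp only [Prod.mk.injEq] at h <;> omega
    exact ((Pplus u).finite_toSet.injOn_iff_bijOn_of_mapsTo hmaps).mp hinj
  · -- sign values
    intro l _
    unfold efun
    split_ifs
    · exact Or.inl rfl
    · exact Or.inr rfl
  · -- main identity
    rintro ⟨l0, l1, l2⟩ hl ⟨m0, m1, m2⟩ hm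
    rw [mem_Pplus] at hl hm
    dsimp only at hl hm
    have hX : bar (l0, l1, l2) + rho = ((l1 : ℂ) + 1, (l2 : ℂ) + 1) := by
      simp [bar, rho, Prod.ext_iff]
    have hY : bar (m0, m1, m2) + rho = ((m1 : ℂ) + 1, (m2 : ℂ) + 1) := by
      simp [bar, rho, Prod.ext_iff]
    set X : ℂ × ℂ := ((l1 : ℂ) + 1, (l2 : ℂ) + 1) with hXdef
    set Y : ℂ × ℂ := ((m1 : ℂ) + 1, (m2 : ℂ) + 1) with hYdef
    by_cases h1 : u < 2 * m1 + 2
    · -- Case C : w' = w₄, σ = [3,5,1,4,0,2], eps = -1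
      have hp : pfun u (m0, m1, m2)
          = (2 * m2 + 1, 2 * u - (2 * m1 + 2 * m2 + 5), 2 * m1 + 1 - u) := by
        simp only [pfun]; rw [if_pos h1]
      have he : efun u (m0, m1, m2) = -1 := by
        simp only [efun]; rw [if_neg (by tauto)]
      have hM : bar (pfun u (m0, m1, m2)) + rho
          = (2 * (u : ℂ) - 2 * m1 - 2 * m2 - 4, 2 * (m1 : ℂ) + 2 - u) := by
        rw [hp]
        simp only [bar, rho, Prod.mk_add_mk, Prod.mk.injEq]
        constructor
        · rw [Nat.cast_sub (by omega)]; push_cast; ring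
        · rw [Nat.cast_sub (by omega)]; push_cast; ring
      set M : ℂ × ℂ := (2 * (u : ℂ) - 2 * m1 - 2 * m2 - 4, 2 * (m1 : ℂ) + 2 - u) with hMdef
      have T0 := exp_shift u hupos (bform (wmap 0 X) Y) (bform (wmap 3 X) M) (l1 + l2 + 2)
        (by simp only [wmap0, wmap3, bform, hXdef, hYdef, hMdef]; push_cast; ring)
      have T1 := exp_shift u hupos (bform (wmap 1 X) Y) (bform (wmap 5 X) M) (l2 + 1)
        (by simp only [wmap1, wmap5, bform, hXdef, hYdef, hMdef]; push_cast; ring)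
      have T2 := exp_shift u hupos (bform (wmap 2 X) Y) (bform (wmap 1 X) M) (l1 + 1)
        (by simp only [wmap2, wmap1, bform, hXdef, hYdef, hMdef]; push_cast; ring)
      have T3 := exp_shift u hupos (bform (wmap 3 X) Y) (bform (wmap 4 X) M) (-(l2 + 1))
        (by simp only [wmap3, wmap4, bform, hXdef, hYdef, hMdef]; push_cast; ring)
      have T4 := exp_shift u hupos (bform (wmap 4 X) Y) (bform (wmap 0 X) M) (-(l1 + 1))
        (by simp only [wmap4, wmap0, bform, hXdef, hYdef, hMdef]; push_cast; ring)
      have T5 := exp_shift u hupos (bform (wmap 5 X) Y) (bform (wmap 2 X) M) (-(l1 + l2 + 2))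
        (by simp only [wmap5, wmap2, bform, hXdef, hYdef, hMdef]; push_cast; ring)
      rw [Gmat, ScalP, hX, hY, hM, he, Fin.sum_univ_six, Fin.sum_univ_six,
        T0, T1, T2, T3, T4, T5, wdet0, wdet1, wdet2, wdet3, wdet4, wdet5]
      push_cast
      ring
    · by_cases h2 : u < 2 * m2 + 2
      · -- Case D : w' = w₃, σ = [4,2,5,0,3,1], eps = -1
        have hp : pfun u (m0, m1, m2)
            = (2 * m1 + 1, 2 * m2 + 1 - u, 2 * u - (2 * m1 + 2 * m2 + 5)) := by
          simp only [pfun]; rw [if_neg h1, if_pos h2]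
        have he : efun u (m0, m1, m2) = -1 := by
          simp only [efun]; rw [if_neg (by tauto)]
        have hM : bar (pfun u (m0, m1, m2)) + rho
            = (2 * (m2 : ℂ) + 2 - u, 2 * (u : ℂ) - 2 * m1 - 2 * m2 - 4) := by
          rw [hp]
          simp only [bar, rho, Prod.mk_add_mk, Prod.mk.injEq]
          constructor
          · rw [Nat.cast_sub (by omega)]; push_cast; ring
          · rw [Nat.cast_sub (by omega)]; push_cast; ring
        set M : ℂ × ℂ := (2 * (m2 : ℂ) + 2 - u, 2 * (u : ℂ) - 2 * m1 - 2 * m2 - 4) with hMdef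
        have T0 := exp_shift u hupos (bform (wmap 0 X) Y) (bform (wmap 4 X) M) (l1 + l2 + 2)
          (by simp only [wmap0, wmap4, bform, hXdef, hYdef, hMdef]; push_cast; ring)
        have T1 := exp_shift u hupos (bform (wmap 1 X) Y) (bform (wmap 2 X) M) (l2 + 1)
          (by simp only [wmap1, wmap2, bform, hXdef, hYdef, hMdef]; push_cast; ring)
        have T2 := exp_shift u hupos (bform (wmap 2 X) Y) (bform (wmap 5 X) M) (l1 + 1)
          (by simp only [wmap2, wmap5, bform, hXdef, hYdef, hMdef]; push_cast; ring)
        have T3 := exp_shift u hupos (bform (wmap 3 X) Y) (bform (wmap 0 X) M) (-(l2 + 1))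
          (by simp only [wmap3, wmap0, bform, hXdef, hYdef, hMdef]; push_cast; ring)
        have T4 := exp_shift u hupos (bform (wmap 4 X) Y) (bform (wmap 3 X) M) (-(l1 + 1))
          (by simp only [wmap4, wmap3, bform, hXdef, hYdef, hMdef]; push_cast; ring)
        have T5 := exp_shift u hupos (bform (wmap 5 X) Y) (bform (wmap 1 X) M) (-(l1 + l2 + 2))
          (by simp only [wmap5, wmap1, bform, hXdef, hYdef, hMdef]; push_cast; ring)
        rw [Gmat, ScalP, hX, hY, hM, he, Fin.sum_univ_six, Fin.sum_univ_six,
          T0, T1, T2, T3, T4, T5, wdet0, wdet1, wdet2, wdet3, wdet4, wdet5]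
        push_cast
        ring
      · by_cases h3 : u < 2 * m1 + 2 * m2 + 4
        · -- Case B : w' = w₅, σ = [5,3,4,1,2,0], eps = 1
          have hp : pfun u (m0, m1, m2)
              = (2 * m1 + 2 * m2 + 3 - u, u - (2 * m2 + 3), u - (2 * m1 + 3)) := by
            simp only [pfun]; rw [if_neg h1, if_neg h2, if_pos h3]
          have he : efun u (m0, m1, m2) = 1 := by
            simp only [efun]; rw [if_pos ⟨h1, h2, h3⟩]
          have hM : bar (pfun u (m0, m1, m2)) + rho
              = ((u : ℂ) - 2 * m2 - 2, (u : ℂ) - 2 * m1 - 2) := by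
            rw [hp]
            simp only [bar, rho, Prod.mk_add_mk, Prod.mk.injEq]
            constructor
            · rw [Nat.cast_sub (by omega)]; push_cast; ring
            · rw [Nat.cast_sub (by omega)]; push_cast; ring
          set M : ℂ × ℂ := ((u : ℂ) - 2 * m2 - 2, (u : ℂ) - 2 * m1 - 2) with hMdef
          have T0 := exp_shift u hupos (bform (wmap 0 X) Y) (bform (wmap 5 X) M) (l1 + l2 + 2)
            (by simp only [wmap0, wmap5, bform, hXdef, hYdef, hMdef]; push_cast; ring)
          have T1 := exp_shift u hupos (bform (wmap 1 X) Y) (bform (wmap 3 X) M) (l2 + 1)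
            (by simp only [wmap1, wmap3, bform, hXdef, hYdef, hMdef]; push_cast; ring)
          have T2 := exp_shift u hupos (bform (wmap 2 X) Y) (bform (wmap 4 X) M) (l1 + 1)
            (by simp only [wmap2, wmap4, bform, hXdef, hYdef, hMdef]; push_cast; ring)
          have T3 := exp_shift u hupos (bform (wmap 3 X) Y) (bform (wmap 1 X) M) (-(l2 + 1))
            (by simp only [wmap3, wmap1, bform, hXdef, hYdef, hMdef]; push_cast; ring)
          have T4 := exp_shift u hupos (bform (wmap 4 X) Y) (bform (wmap 2 X) M) (-(l1 + 1))
            (by simp only [wmap4, wmap2, bform, hXdef, hYdef, hMdef]; push_cast; ring)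
          have T5 := exp_shift u hupos (bform (wmap 5 X) Y) (bform (wmap 0 X) M) (-(l1 + l2 + 2))
            (by simp only [wmap5, wmap0, bform, hXdef, hYdef, hMdef]; push_cast; ring)
          rw [Gmat, ScalP, hX, hY, hM, he, Fin.sum_univ_six, Fin.sum_univ_six,
            T0, T1, T2, T3, T4, T5, wdet0, wdet1, wdet2, wdet3, wdet4, wdet5]
          push_cast
          ring
        · -- Case A : w' = id, σ = id, eps = -1
          have hp : pfun u (m0, m1, m2)
              = (u - (2 * m1 + 2 * m2 + 5), 2 * m1 + 1, 2 * m2 + 1) := by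
            simp only [pfun]; rw [if_neg h1, if_neg h2, if_neg h3]
          have he : efun u (m0, m1, m2) = -1 := by
            simp only [efun]; rw [if_neg (by tauto)]
          have hM : bar (pfun u (m0, m1, m2)) + rho
              = (2 * (m1 : ℂ) + 2, 2 * (m2 : ℂ) + 2) := by
            rw [hp]
            simp only [bar, rho, Prod.mk_add_mk, Prod.mk.injEq]
            constructor
            · push_cast; ring
            · push_cast; ring
          set M : ℂ × ℂ := (2 * (m1 : ℂ) + 2, 2 * (m2 : ℂ) + 2) with hMdef
          have T0 := exp_shift u hupos (bform (wmap 0 X) Y) (bform (wmap 0 X) M) 0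
            (by simp only [wmap0, bform, hXdef, hYdef, hMdef]; push_cast; ring)
          have T1 := exp_shift u hupos (bform (wmap 1 X) Y) (bform (wmap 1 X) M) 0
            (by simp only [wmap1, bform, hXdef, hYdef, hMdef]; push_cast; ring)
          have T2 := exp_shift u hupos (bform (wmap 2 X) Y) (bform (wmap 2 X) M) 0
            (by simp only [wmap2, bform, hXdef, hYdef, hMdef]; push_cast; ring)
          have T3 := exp_shift u hupos (bform (wmap 3 X) Y) (bform (wmap 3 X) M) 0
            (by simp only [wmap3, bform, hXdef, hYdef, hMdef]; push_cast; ring)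
          have T4 := exp_shift u hupos (bform (wmap 4 X) Y) (bform (wmap 4 X) M) 0
            (by simp only [wmap4, bform, hXdef, hYdef, hMdef]; push_cast; ring)
          have T5 := exp_shift u hupos (bform (wmap 5 X) Y) (bform (wmap 5 X) M) 0
            (by simp only [wmap5, bform, hXdef, hYdef, hMdef]; push_cast; ring)
          rw [Gmat, ScalP, hX, hY, hM, he, Fin.sum_univ_six, Fin.sum_univ_six,
            T0, T1, T2, T3, T4, T5, wdet0, wdet1, wdet2, wdet3, wdet4, wdet5]
          push_cast
          ring

end
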